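/- With M and \widehat{M}(n) as above and μ ≤ −1 a real number: if \widehat{M}(n) has a principal submatrix of order at most m with smallest eigenvalue less than μ, then M also has a principal submatrix of order at most m with smallest eigenvalue less than μ. -/

import Mathlib

open Matrix

/-- The block matrix `M̂(n)` of the paper: block rows `(M¹¹, M¹², O)`, `(M²¹, M²²+J, J)`,
`(O, J, J-I)`, here built from `M` indexed by `I1 ⊕ I2` by adding `J` on the `I2 × I2` block. -/
noncomputable def Mhat {I1 I2 : Type*} [Fintype I1] [Fintype I2]
    [DecidableEq I1] [DecidableEq I2]
    (M : Matrix (I1 ⊕ I2) (I1 ⊕ I2) ℝ) (n : ℕ) :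
    Matrix ((I1 ⊕ I2) ⊕ Fin n) ((I1 ⊕ I2) ⊕ Fin n) ℝ :=
  Matrix.fromBlocks
    (M + Matrix.fromBlocks 0 0 0 (Matrix.of fun _ _ => (1 : ℝ)))
    (Matrix.of fun a _ => Sum.elim (fun _ => (0 : ℝ)) (fun _ => 1) a)
    (Matrix.of fun _ a => Sum.elim (fun _ => (0 : ℝ)) (fun _ => 1) a)
    (Matrix.of (fun _ _ => (1 : ℝ)) - 1)

def Cfun {I1 I2 : Type*} (n : ℕ) : (I1 ⊕ I2) ⊕ Fin n → ℝ :=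
  Sum.elim (Sum.elim (fun _ => (0:ℝ)) (fun _ => 1)) (fun _ => 1)

def Nmat {I1 I2 : Type*} (M : Matrix (I1 ⊕ I2) (I1 ⊕ I2) ℝ) (n : ℕ) :
    Matrix ((I1 ⊕ I2) ⊕ Fin n) ((I1 ⊕ I2) ⊕ Fin n) ℝ :=
  Matrix.fromBlocks M 0 0 0

def Dmat {I1 I2 : Type*} (n : ℕ) :
    Matrix ((I1 ⊕ I2) ⊕ Fin n) ((I1 ⊕ I2) ⊕ Fin n) ℝ :=
  Matrix.fromBlocks 0 0 0 (1 : Matrix (Fin n) (Fin n) ℝ)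

lemma Nmat_inl_inl {I1 I2 : Type*} (M : Matrix (I1 ⊕ I2) (I1 ⊕ I2) ℝ) (n : ℕ)
    (a b : I1 ⊕ I2) : Nmat M n (Sum.inl a) (Sum.inl b) = M a b := rfl

lemma Nmat_eq_zero {I1 I2 : Type*} (M : Matrix (I1 ⊕ I2) (I1 ⊕ I2) ℝ) (n : ℕ)
    (a b : (I1 ⊕ I2) ⊕ Fin n) (h : ¬ a.isLeft ∨ ¬ b.isLeft) : Nmat M n a b = 0 := by
  rcases a with a | a <;> rcases b with b | b <;> simp_all [Nmat, Matrix.fromBlocks]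

lemma Dmat_ne {I1 I2 : Type*} (n : ℕ) (a b : (I1 ⊕ I2) ⊕ Fin n) (h : a ≠ b) :
    Dmat (I1 := I1) (I2 := I2) n a b = 0 := by
  rcases a with a | a <;> rcases b with b | b <;>
    simp_all [Dmat, Matrix.fromBlocks, Matrix.one_apply]

lemma Dmat_diag {I1 I2 : Type*} (n : ℕ) (a : (I1 ⊕ I2) ⊕ Fin n) :
    Dmat (I1 := I1) (I2 := I2) n a a = if a.isRight then 1 else 0 := by
  rcases a with a | a <;> simp [Dmat, Matrix.fromBlocks]

lemma Mhat_decomp {I1 I2 : Type*} [Fintype I1] [Fintype I2]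
    [DecidableEq I1] [DecidableEq I2]
    (M : Matrix (I1 ⊕ I2) (I1 ⊕ I2) ℝ) (n : ℕ) (a b : (I1 ⊕ I2) ⊕ Fin n) :
    Mhat M n a b = Nmat M n a b + Cfun n a * Cfun n b - Dmat n a b := by
  rcases a with (a | a)
  · rcases b with (b | b)
    · rcases a with a | a <;> rcases b with b | b <;>
        simp [Mhat, Cfun, Nmat, Dmat, Matrix.fromBlocks, Matrix.add_apply]
    · rcases a with a | a <;> simp [Mhat, Cfun, Nmat, Dmat, Matrix.fromBlocks]
  · rcases b with (b | b)
    · rcases b with b | b <;> simp [Mhat, Cfun, Nmat, Dmat, Matrix.fromBlocks]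
    · simp [Mhat, Cfun, Nmat, Dmat, Matrix.fromBlocks, Matrix.sub_apply]

lemma quad_sum {N : Type*} [Fintype N] (P : Matrix N N ℝ) (x : N → ℝ) :
    x ⬝ᵥ (P *ᵥ x) = ∑ i, ∑ j, x i * P i j * x j := by
  simp [dotProduct, Matrix.mulVec, Finset.mul_sum, mul_assoc]

lemma core {I1 I2 : Type*} [Fintype I1] [Fintype I2]
    [DecidableEq I1] [DecidableEq I2]
    (M : Matrix (I1 ⊕ I2) (I1 ⊕ I2) ℝ) {n : ℕ} {μ : ℝ} (hμ : μ ≤ -1)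
    {k : ℕ} (f : Fin k ↪ ((I1 ⊕ I2) ⊕ Fin n)) (x : Fin k → ℝ)
    (hquad : x ⬝ᵥ ((Mhat M n).submatrix f f *ᵥ x) < μ * (x ⬝ᵥ x)) :
    ∃ (k' : ℕ) (_ : k' ≤ k) (g : Fin k' ↪ (I1 ⊕ I2)) (y : Fin k' → ℝ),
      y ⬝ᵥ (M.submatrix g g *ᵥ y) < μ * (y ⬝ᵥ y) := by
  classical
  set c : Fin k → ℝ := fun i => Cfun n (f i) with hcdef
  set s : Finset (Fin k) := Finset.univ.filter (fun i => (f i).isLeft) with hsdef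
  set e : Fin s.card ≃o s := s.orderIsoOfFin rfl with hedef
  have hleft : ∀ j : Fin s.card, (f ((e j : s) : Fin k)).isLeft := fun j =>
    (Finset.mem_filter.mp (e j).2).2
  have hginj : Function.Injective (fun j => (f ((e j : s) : Fin k)).getLeft (hleft j)) := by
    intro j j' hjj
    have h1 : f ((e j : s) : Fin k) = f ((e j' : s) : Fin k) := by
      rw [← Sum.inl_getLeft _ (hleft j), ← Sum.inl_getLeft _ (hleft j')]
      exact congrArg Sum.inl hjj
    exact e.injective (Subtype.ext (f.injective h1))
  set g : Fin s.card ↪ (I1 ⊕ I2) :=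
    ⟨fun j => (f ((e j : s) : Fin k)).getLeft (hleft j), hginj⟩ with hgdef
  have hfe : ∀ j, f ((e j : s) : Fin k) = Sum.inl (g j) := fun j =>
    (Sum.inl_getLeft _ (hleft j)).symm
  set y : Fin s.card → ℝ := fun j => x ((e j : s) : Fin k) with hydef
  have hsum_s : ∀ F : Fin k → ℝ, ∑ i ∈ s, F i = ∑ p, F ((e p : s) : Fin k) := by
    intro F
    rw [← Finset.sum_coe_sort s F]
    exact (Fintype.sum_equiv e.toEquiv (fun p => F ((e p : s) : Fin k))
      (fun i => F (i : Fin k)) (fun p => rfl)).symm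
  -- main expansion
  have expand : x ⬝ᵥ ((Mhat M n).submatrix f f *ᵥ x)
      = (∑ i, ∑ j, x i * Nmat M n (f i) (f j) * x j)
        + (∑ i, c i * x i) * (∑ i, c i * x i)
        - (∑ i, if (f i).isRight then x i * x i else 0) := by
    rw [quad_sum]
    have h1 : ∀ i j : Fin k, x i * ((Mhat M n).submatrix f f i j) * x j
        = x i * Nmat M n (f i) (f j) * x j + (c i * x i) * (c j * x j)
          - x i * Dmat n (f i) (f j) * x j := by
      intro i j
      rw [Matrix.submatrix_apply, Mhat_decomp]
      ring
    simp_rw [h1]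
    simp_rw [Finset.sum_sub_distrib]
    simp_rw [Finset.sum_add_distrib]
    congr 1
    · congr 1
      simp_rw [← Finset.mul_sum]
      rw [← Finset.sum_mul]
    · apply Finset.sum_congr rfl
      intro i _
      rw [Finset.sum_eq_single i]
      · rw [Dmat_diag]
        split_ifs <;> ring
      · intro j _ hji
        rw [Dmat_ne n _ _ (fun hc => hji (f.injective hc).symm), mul_zero, zero_mul]
      · intro hi
        exact absurd (Finset.mem_univ i) hi
  -- restrict the Nmat-sum to s
  have hrestr : (∑ i, ∑ j, x i * Nmat M n (f i) (f j) * x j)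
      = ∑ p, ∑ q, y p * M.submatrix g g p q * y q := by
    have step1 : (∑ i, ∑ j, x i * Nmat M n (f i) (f j) * x j)
        = ∑ i ∈ s, ∑ j ∈ s, x i * Nmat M n (f i) (f j) * x j := by
      rw [eq_comm]
      rw [Finset.sum_subset (Finset.subset_univ s)]
      · apply Finset.sum_congr rfl
        intro i _
        rw [Finset.sum_subset (Finset.subset_univ s)]
        intro j _ hj
        have hjl : ¬ (f j).isLeft := by
          intro hc
          exact hj (Finset.mem_filter.mpr ⟨Finset.mem_univ j, hc⟩)
        rw [Nmat_eq_zero _ _ _ _ (Or.inr hjl), mul_zero, zero_mul]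
      · intro i _ hi
        have hil : ¬ (f i).isLeft := by
          intro hc
          exact hi (Finset.mem_filter.mpr ⟨Finset.mem_univ i, hc⟩)
        apply Finset.sum_eq_zero
        intro j _
        rw [Nmat_eq_zero _ _ _ _ (Or.inl hil), mul_zero, zero_mul]
    rw [step1, hsum_s]
    apply Finset.sum_congr rfl
    intro p _
    rw [hsum_s]
    apply Finset.sum_congr rfl
    intro q _
    rw [Matrix.submatrix_apply]
    congr 2
    rw [hfe p, hfe q, Nmat_inl_inl]
  -- norm splitting
  have hx2 : x ⬝ᵥ x = y ⬝ᵥ y + ∑ i, (if (f i).isRight then x i * x i else 0) := by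
    have hsplit := Finset.sum_filter_add_sum_filter_not Finset.univ
      (fun i => (f i).isLeft) (fun i => x i * x i)
    rw [dotProduct, ← hsplit]
    congr 1
    · show ∑ i ∈ s, x i * x i = y ⬝ᵥ y
      rw [hsum_s]
      rfl
    · rw [Finset.sum_filter]
      apply Finset.sum_congr rfl
      intro i _
      rcases hfi : f i with a | p <;> simp [hfi]
  -- put it together
  refine ⟨s.card, le_trans (Finset.card_filter_le _ _) (by simp), g, y, ?_⟩
  set S := ∑ i, c i * x i with hS
  set T := ∑ i, (if (f i).isRight then x i * x i else 0) with hT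
  have hT0 : 0 ≤ T := Finset.sum_nonneg fun i _ => by
    split_ifs
    exacts [mul_self_nonneg _, le_rfl]
  have hS0 : 0 ≤ S * S := mul_self_nonneg S
  have hyq : y ⬝ᵥ (M.submatrix g g *ᵥ y)
      = x ⬝ᵥ ((Mhat M n).submatrix f f *ᵥ x) - S * S + T := by
    rw [expand, quad_sum (M.submatrix (g : Fin s.card → I1 ⊕ I2) g), ← hrestr]
    ring
  have hmuT : μ * T ≤ -T := by nlinarith
  have hmux : μ * (x ⬝ᵥ x) = μ * (y ⬝ᵥ y) + μ * T := by rw [hx2]; ring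
  linarith [hquad]

lemma quad_lower {N : Type*} [Fintype N] [DecidableEq N] {B : Matrix N N ℝ}
    (hB : B.IsHermitian) {μ : ℝ} (hall : ∀ i, μ ≤ hB.eigenvalues i) (x : N → ℝ) :
    μ * (x ⬝ᵥ x) ≤ x ⬝ᵥ (B *ᵥ x) := by
  have hps : (B - μ • 1).PosSemidef := by
    have hU : B = (hB.eigenvectorUnitary : Matrix N N ℝ) * diagonal hB.eigenvalues
        * star (hB.eigenvectorUnitary : Matrix N N ℝ) := by
      simpa using hB.spectral_theorem
    have h1 : (hB.eigenvectorUnitary : Matrix N N ℝ) *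
        star (hB.eigenvectorUnitary : Matrix N N ℝ) = 1 :=
      Matrix.mem_unitaryGroup_iff.mp hB.eigenvectorUnitary.2
    have key : B - μ • 1 = (hB.eigenvectorUnitary : Matrix N N ℝ) *
        diagonal (fun i => hB.eigenvalues i - μ)
        * (hB.eigenvectorUnitary : Matrix N N ℝ)ᴴ := by
      have hd : diagonal (fun i => hB.eigenvalues i - μ)
          = diagonal hB.eigenvalues - μ • 1 := by
        ext i j
        by_cases hij : i = j <;>
          simp [diagonal, Matrix.one_apply, hij, Matrix.smul_apply]
      rw [hd, Matrix.mul_sub, Matrix.sub_mul, ← Matrix.star_eq_conjTranspose, ← hU]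
      congr 1
      rw [Matrix.mul_smul, Matrix.smul_mul, mul_one, h1]
    rw [key]
    exact (Matrix.posSemidef_diagonal_iff.mpr fun i => sub_nonneg.2 (hall i)
      ).mul_mul_conjTranspose_same _
  have h2 := hps.dotProduct_mulVec_nonneg x
  simp only [Matrix.sub_mulVec, Matrix.smul_mulVec, Matrix.one_mulVec,
    dotProduct_sub, dotProduct_smul, star_trivial, RCLike.re_to_real, smul_eq_mul] at h2
  linarith [h2]

lemma eig_lt {N : Type*} [Fintype N] [DecidableEq N] {B : Matrix N N ℝ}
    (hB : B.IsHermitian) {μ : ℝ} {x : N → ℝ}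
    (hq : x ⬝ᵥ (B *ᵥ x) < μ * (x ⬝ᵥ x)) : ∃ i, hB.eigenvalues i < μ := by
  by_contra hc
  push_neg at hc
  exact absurd (quad_lower hB hc x) (not_le.mpr hq)

/-- If `M̂(n)` has a principal submatrix of order at most `m` with smallest eigenvalue less
than `μ ≤ -1`, then `M` also has a principal submatrix of order at most `m` with smallest
eigenvalue less than `μ`. -/
theorem stmt_7 {I1 I2 : Type*} [Fintype I1] [Fintype I2]
    [DecidableEq I1] [DecidableEq I2]
    (M : Matrix (I1 ⊕ I2) (I1 ⊕ I2) ℝ) (hM : M.IsHermitian)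
    {n : ℕ} (hn : 1 ≤ n) (hMh : (Mhat M n).IsHermitian)
    (μ : ℝ) (hμ : μ ≤ -1) (m : ℕ)
    (h : ∃ (k : ℕ) (_ : k ≤ m) (f : Fin k ↪ ((I1 ⊕ I2) ⊕ Fin n)),
      (⨅ i, (hMh.submatrix (f : Fin k → ((I1 ⊕ I2) ⊕ Fin n))).eigenvalues i) < μ) :
    ∃ (k : ℕ) (_ : k ≤ m) (g : Fin k ↪ (I1 ⊕ I2)),
      (⨅ i, (hM.submatrix (g : Fin k → (I1 ⊕ I2))).eigenvalues i) < μ := by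
  obtain ⟨k, hk, f, hlt⟩ := h
  rcases Nat.eq_zero_or_pos k with hk0 | hk0
  · subst hk0
    rw [Real.iInf_of_isEmpty] at hlt
    linarith
  have : Nonempty (Fin k) := ⟨⟨0, hk0⟩⟩
  set hA := hMh.submatrix (f : Fin k → ((I1 ⊕ I2) ⊕ Fin n)) with hAdef
  obtain ⟨i₀, hi₀⟩ := exists_lt_of_ciInf_lt hlt
  set x : Fin k → ℝ := ⇑(hA.eigenvectorBasis i₀) with hxdef
  have hx0 : x ≠ 0 := by
    intro hx
    apply hA.eigenvectorBasis.orthonormal.ne_zero i₀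
    ext j
    exact congrFun hx j
  have hxx : 0 < x ⬝ᵥ x := by
    rcases (lt_or_eq_of_le (Finset.sum_nonneg fun i _ =>
      mul_self_nonneg (x i) : (0:ℝ) ≤ x ⬝ᵥ x)) with h' | h'
    · exact h'
    · exact absurd (dotProduct_self_eq_zero.mp h'.symm) hx0
  have hquad : x ⬝ᵥ ((Mhat M n).submatrix f f *ᵥ x) < μ * (x ⬝ᵥ x) := by
    have hmv : (Mhat M n).submatrix f f *ᵥ x = hA.eigenvalues i₀ • x :=
      hA.mulVec_eigenvectorBasis i₀
    rw [hmv, dotProduct_smul, smul_eq_mul]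
    exact (mul_lt_mul_of_pos_right hi₀ hxx)
  obtain ⟨k', hk'le, g, y, hy⟩ := core M hμ f x hquad
  obtain ⟨i₁, hi₁⟩ := eig_lt (hM.submatrix (g : Fin k' → (I1 ⊕ I2))) hy
  refine ⟨k', le_trans hk'le hk, g, ?_⟩
  refine lt_of_le_of_lt ?_ hi₁
  exact ciInf_le (Set.Finite.bddBelow (Set.finite_range _)) i₁
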